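/- Let $p$ be prime, $F$ an algebraically closed field of characteristic $p$, and $G \subseteq S_p$ any subgroup whose order is divisible by $p$, acting on $V = F^p$ by permuting coordinates. Then $\delta(G, V) = p$. -/

import Mathlib

open MvPolynomial

/-- `f` is invariant under the subgroup `G ≤ S_p` permuting the variables. -/
def permInv {F : Type*} [Field F] {p : ℕ} (G : Subgroup (Equiv.Perm (Fin p)))
    (f : MvPolynomial (Fin p) F) : Prop :=
  ∀ g ∈ G, rename (⇑g) f = f

/-- `v` is fixed by the coordinate-permutation action of `G`. -/
def permFixed {F : Type*} [Field F] {p : ℕ} (G : Subgroup (Equiv.Perm (Fin p)))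
    (v : Fin p → F) : Prop :=
  ∀ g ∈ G, v ∘ ⇑g = v

/-- `ε(G,v)` for `G ≤ S_p` acting on `F^p` by permuting coordinates. -/
noncomputable def epsPerm {F : Type*} [Field F] {p : ℕ} (G : Subgroup (Equiv.Perm (Fin p)))
    (v : Fin p → F) : ℕ :=
  sInf {d : ℕ | 0 < d ∧ ∃ f : MvPolynomial (Fin p) F,
    permInv G f ∧ f.IsHomogeneous d ∧ eval v f ≠ 0}

/-- `δ(G, F^p)` for the permutation action. -/
noncomputable def deltaPerm {F : Type*} [Field F] {p : ℕ}
    (G : Subgroup (Equiv.Perm (Fin p))) : ℕ :=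
  sSup {e : ℕ | ∃ v : Fin p → F, v ≠ 0 ∧ permFixed G v ∧ e = epsPerm (F := F) G v}


/-- If `τ` is a cycle moving every point and `m ∘ τ = m`, then `m` is constant. -/
lemma const_of_comp_cycle {p : ℕ} {τ : Equiv.Perm (Fin p)} (hcyc : τ.IsCycle)
    (hmove : ∀ i, τ i ≠ i) {M : Type*} (m : Fin p → M)
    (hm : ∀ i, m (τ i) = m i) (i j : Fin p) : m i = m j := by
  obtain ⟨n, hn⟩ := hcyc.exists_pow_eq (hmove i) (hmove j)
  have key : ∀ n : ℕ, m ((τ ^ n) i) = m i := by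
    intro n
    induction n with
    | zero => simp
    | succ k ih => rw [pow_succ', Equiv.Perm.mul_apply, hm, ih]
  rw [← hn, key]

/-- Sum of a function constant on free orbits of an order-`p` permutation is zero in char `p`. -/
lemma sum_zero_of_free {F M : Type*} [Field F] [DecidableEq M] {p : ℕ} (hp : 0 < p)
    [CharP F p] (φ : Equiv.Perm M) (c : M → F) (hc : ∀ m, c (φ m) = c m)
    (hper : ∀ m, (φ ^ p) m = m) :
    ∀ s : Finset M, (∀ m ∈ s, φ m ∈ s) → (∀ m ∈ s, ∀ k, 0 < k → k < p → (φ ^ k) m ≠ m) →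
      ∑ m ∈ s, c m = 0 := by
  intro s
  induction s using Finset.strongInduction with
  | _ s ih =>
    intro hinv hfree
    rcases s.eq_empty_or_nonempty with rfl | ⟨m₀, hm₀⟩
    · simp
    have hpowmem : ∀ n : ℕ, (φ ^ n) m₀ ∈ s := by
      intro n
      induction n with
      | zero => simpa using hm₀
      | succ k ihk => rw [pow_succ', Equiv.Perm.mul_apply]; exact hinv _ ihk
    set O : Finset M := (Finset.range p).image (fun k => (φ ^ k) m₀) with hO
    have hOsub : O ⊆ s := by
      intro x hx
      simp only [hO, Finset.mem_image, Finset.mem_range] at hx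
      obtain ⟨k, -, rfl⟩ := hx
      exact hpowmem k
    have hinj : Set.InjOn (fun k => (φ ^ k) m₀) (Finset.range p) := by
      intro a ha b hb hab
      simp only [Finset.coe_range, Set.mem_Iio] at ha hb
      simp only at hab
      by_contra hne
      rcases Nat.lt_or_ge a b with h | h
      · have : (φ ^ (b - a)) ((φ ^ a) m₀) = (φ ^ a) m₀ := by
          rw [← Equiv.Perm.mul_apply, ← pow_add, Nat.sub_add_cancel h.le]
          exact hab.symm
        exact hfree _ (hpowmem a) (b - a) (Nat.sub_pos_of_lt h) (lt_of_le_of_lt (Nat.sub_le _ _) hb) this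
      · have hba : b < a := lt_of_le_of_ne h (fun e => hne e.symm)
        have : (φ ^ (a - b)) ((φ ^ b) m₀) = (φ ^ b) m₀ := by
          rw [← Equiv.Perm.mul_apply, ← pow_add, Nat.sub_add_cancel hba.le]
          exact hab
        exact hfree _ (hpowmem b) (a - b) (Nat.sub_pos_of_lt hba) (lt_of_le_of_lt (Nat.sub_le _ _) ha) this
    have hcard : O.card = p := by
      rw [hO, Finset.card_image_of_injOn hinj, Finset.card_range]
    have hconst : ∀ x ∈ O, c x = c m₀ := by
      intro x hx
      simp only [hO, Finset.mem_image, Finset.mem_range] at hx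
      obtain ⟨k, -, rfl⟩ := hx
      induction k with
      | zero => simp
      | succ n ihn => rw [pow_succ', Equiv.Perm.mul_apply, hc]; exact ihn
    have hsumO : ∑ x ∈ O, c x = 0 := by
      rw [Finset.sum_congr rfl hconst, Finset.sum_const, hcard, nsmul_eq_mul,
        CharP.cast_eq_zero F p, zero_mul]
    have hm₀O : m₀ ∈ O := by
      simp only [hO, Finset.mem_image, Finset.mem_range]
      exact ⟨0, hp, by simp⟩
    have hred : ∀ n, (φ ^ n) m₀ = (φ ^ (n % p)) m₀ := by
      intro n
      induction n using Nat.strong_induction_on with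
      | _ n ih2 =>
        rcases Nat.lt_or_ge n p with h | h
        · rw [Nat.mod_eq_of_lt h]
        · have heq : n = (n - p) + p := by omega
          rw [heq, pow_add, Equiv.Perm.mul_apply, hper, ih2 (n - p) (by omega)]
          congr 2
          rw [Nat.add_mod_right]
    have hss : s \ O ⊂ s := Finset.sdiff_ssubset (by exact_mod_cast hOsub) ⟨m₀, hm₀O⟩
    have hsplit : ∑ x ∈ s \ O, c x + ∑ x ∈ O, c x = ∑ x ∈ s, c x :=
      Finset.sum_sdiff hOsub
    have hrest : ∑ x ∈ s \ O, c x = 0 := by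
      apply ih _ hss
      · intro m hm
        rw [Finset.mem_sdiff] at hm ⊢
        refine ⟨hinv _ hm.1, ?_⟩
        intro hmem
        apply hm.2
        simp only [hO, Finset.mem_image, Finset.mem_range] at hmem ⊢
        obtain ⟨k, hk, hk2⟩ := hmem
        have hφm : m = (φ ^ (p - 1 + k)) m₀ := by
          have h1 : φ ((φ ^ (p - 1 + k)) m₀) = (φ ^ k) m₀ := by
            rw [← Equiv.Perm.mul_apply, ← pow_succ']
            have : p - 1 + k + 1 = k + p := by omega
            rw [this, pow_add, Equiv.Perm.mul_apply, hper]
          apply φ.injective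
          rw [h1]
          exact hk2.symm
        exact ⟨(p - 1 + k) % p, Nat.mod_lt _ hp, by rw [← hred]; exact hφm.symm⟩
      · intro m hm k h1 h2
        exact hfree m (Finset.mem_sdiff.mp hm).1 k h1 h2
    rw [← hsplit, hrest, hsumO, add_zero]

/-- A permutation of order `p` in `S_p` (`p` prime) is a cycle moving every point. -/
lemma cycle_full {p : ℕ} (hp : p.Prime) {τ : Equiv.Perm (Fin p)} (hord : orderOf τ = p) :
    τ.IsCycle ∧ ∀ i, τ i ≠ i := by
  have hcard : Fintype.card (Fin p) = p := Fintype.card_fin p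
  have hcyc : τ.IsCycle :=
    Equiv.Perm.isCycle_of_prime_order'' (by rwa [hcard]) (by rw [hord, hcard])
  have hsupp : τ.support = Finset.univ :=
    Finset.eq_univ_of_card _ (by rw [← hcyc.orderOf, hord, hcard])
  refine ⟨hcyc, fun i => Equiv.Perm.mem_support.mp ?_⟩
  rw [hsupp]; exact Finset.mem_univ i

lemma eps_const {F : Type*} [Field F] {p : ℕ} (hp : p.Prime) [CharP F p]
    (G : Subgroup (Equiv.Perm (Fin p))) {σ : Equiv.Perm (Fin p)} (hσG : σ ∈ G)
    (hord : orderOf σ = p) {c : F} (hc : c ≠ 0) :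
    epsPerm (F := F) G (fun _ => c) = p := by
  classical
  have hmem : p ∈ {d : ℕ | 0 < d ∧ ∃ f : MvPolynomial (Fin p) F,
      permInv G f ∧ f.IsHomogeneous d ∧ eval (fun _ => c) f ≠ 0} := by
    refine ⟨hp.pos, ∏ i : Fin p, X i, ?_, ?_, ?_⟩
    · intro g hg
      rw [map_prod]
      simp only [rename_X]
      exact Equiv.prod_comp g (fun i => (X i : MvPolynomial (Fin p) F))
    · have h := MvPolynomial.IsHomogeneous.prod Finset.univ
        (fun i : Fin p => (X i : MvPolynomial (Fin p) F)) (fun _ => 1)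
        (fun i _ => isHomogeneous_X F i)
      simpa using h
    · rw [map_prod]
      simp only [eval_X]
      rw [Finset.prod_const, Finset.card_univ, Fintype.card_fin]
      exact pow_ne_zero p hc
  apply le_antisymm
  · exact Nat.sInf_le hmem
  · apply le_csInf ⟨p, hmem⟩
    rintro d ⟨hd0, f, hfinv, hfhom, hfev⟩
    by_contra hlt
    push_neg at hlt
    apply hfev
    -- the exponent-permuting action
    set φ : Equiv.Perm (Fin p →₀ ℕ) := Finsupp.equivCongrLeft σ with hφ
    have hφapp : ∀ (m : Fin p →₀ ℕ) (i : Fin p), (φ m) i = m (σ.symm i) := fun m i => rfl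
    have hcoeff : ∀ m : Fin p →₀ ℕ, coeff (φ m) f = coeff m f := by
      intro m
      have h1 : φ m = Finsupp.mapDomain (⇑σ) m := by
        rw [hφ, Finsupp.equivCongrLeft_apply, Finsupp.equivMapDomain_eq_mapDomain]
      rw [h1, ← hfinv σ hσG, MvPolynomial.coeff_rename_mapDomain _ σ.injective]
      rw [hfinv σ hσG]
    have hpow : ∀ (k : ℕ) (m : Fin p →₀ ℕ) (i : Fin p),
        ((φ ^ k) m) i = m ((σ⁻¹ ^ k) i) := by
      intro k
      induction k with
      | zero => intro m i; simp
      | succ n ih =>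
        intro m i
        rw [pow_succ, Equiv.Perm.mul_apply, ih, hφapp]
        congr 1
        rw [pow_succ', Equiv.Perm.mul_apply]
        rfl
    have hσp : σ ^ p = 1 := orderOf_dvd_iff_pow_eq_one.mp (by simp [hord])
    have hper : ∀ m : Fin p →₀ ℕ, (φ ^ p) m = m := by
      intro m
      ext i
      rw [hpow]
      have h2 : σ⁻¹ ^ p = 1 := by rw [inv_pow, hσp, inv_one]
      rw [h2, Equiv.Perm.one_apply]
    have hfree : ∀ m ∈ f.support, ∀ k, 0 < k → k < p → (φ ^ k) m ≠ m := by
      intro m hm k hk1 hk2 hkm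
      set τ : Equiv.Perm (Fin p) := σ⁻¹ ^ k with hτ
      have hτord : orderOf τ = p := by
        rw [hτ, orderOf_pow, orderOf_inv, hord,
          Nat.Coprime.gcd_eq_one (hp.coprime_iff_not_dvd.mpr (Nat.not_dvd_of_pos_of_lt hk1 hk2)),
          Nat.div_one]
      obtain ⟨hcyc, hmove⟩ := cycle_full hp hτord
      have hmτ : ∀ i, m (τ i) = m i := by
        intro i
        have h3 := hpow k m i
        rw [hkm] at h3
        exact h3.symm
      have hmconst : ∀ i j, m i = m j := const_of_comp_cycle hcyc hmove m hmτ
      have hdeg : m.degree = d := by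
        by_contra hne
        exact (MvPolynomial.mem_support_iff.mp hm) (hfhom.coeff_eq_zero hne)
      set i₀ : Fin p := ⟨0, hp.pos⟩
      by_cases ha : m i₀ = 0
      · have : m.degree = 0 := by
          rw [Finsupp.degree]
          apply Finset.sum_eq_zero
          intro i _
          rw [hmconst i i₀, ha]
        omega
      · have hsupp : m.support = Finset.univ := by
          apply Finset.eq_univ_iff_forall.mpr
          intro i
          rw [Finsupp.mem_support_iff, hmconst i i₀]
          exact ha
        have : m.degree = p * m i₀ := by
          rw [Finsupp.degree_apply, hsupp]
          rw [Finset.sum_congr rfl (fun i _ => hmconst i i₀), Finset.sum_const,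
            Finset.card_univ, Fintype.card_fin, smul_eq_mul]
        have h1 : 1 ≤ m i₀ := Nat.one_le_iff_ne_zero.mpr ha
        have : p ≤ m.degree := by rw [this]; exact Nat.le_mul_of_pos_right p (by omega)
        omega
    have hsum : ∑ m ∈ f.support, coeff m f = 0 := by
      apply sum_zero_of_free hp.pos φ (fun m => coeff m f) hcoeff hper
      · intro m hm
        rw [MvPolynomial.mem_support_iff] at hm ⊢
        rw [hcoeff]; exact hm
      · exact hfree
    rw [eval_eq]
    have hterm : ∀ m ∈ f.support, coeff m f * ∏ i ∈ m.support, (fun _ => c) i ^ m i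
        = coeff m f * c ^ d := by
      intro m hm
      congr 1
      rw [Finset.prod_pow_eq_pow_sum]
      congr 1
      have hdeg : m.degree = d := by
        by_contra hne
        exact (MvPolynomial.mem_support_iff.mp hm) (hfhom.coeff_eq_zero hne)
      rw [← hdeg, Finsupp.degree_apply]
    rw [Finset.sum_congr rfl hterm, ← Finset.sum_mul, hsum, zero_mul]

theorem stmt16 {F : Type*} [Field F] [IsAlgClosed F] {p : ℕ} (hp : p.Prime) [CharP F p]
    (G : Subgroup (Equiv.Perm (Fin p))) (hG : p ∣ Nat.card G) :
    deltaPerm (F := F) G = p := by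
  classical
  haveI : Fact p.Prime := ⟨hp⟩
  obtain ⟨x, hx⟩ := exists_prime_orderOf_dvd_card' p hG
  set σ : Equiv.Perm (Fin p) := ↑x with hσdef
  have hord : orderOf σ = p := (Subgroup.orderOf_coe x).trans hx
  obtain ⟨hcyc, hmove⟩ := cycle_full hp hord
  have hσG : σ ∈ G := x.2
  have hset : {e : ℕ | ∃ v : Fin p → F, v ≠ 0 ∧ permFixed G v ∧ e = epsPerm (F := F) G v}
      = {p} := by
    apply Set.eq_singleton_iff_unique_mem.mpr
    constructor
    · refine ⟨fun _ => (1 : F), ?_, ?_, ?_⟩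
      · intro h
        exact one_ne_zero (congrFun h ⟨0, hp.pos⟩)
      · intro g hg
        rfl
      · exact (eps_const hp G hσG hord one_ne_zero).symm
    · rintro e ⟨v, hv0, hvfix, rfl⟩
      have hvσ : ∀ i, v (σ i) = v i := fun i => congrFun (hvfix σ hσG) i
      have hconst : ∀ i j, v i = v j := const_of_comp_cycle hcyc hmove v hvσ
      set c : F := v ⟨0, hp.pos⟩ with hcdef
      have hc : c ≠ 0 := by
        intro hc0
        apply hv0
        funext i
        rw [hconst i ⟨0, hp.pos⟩, ← hcdef, hc0]
        rfl
      have hv : v = fun _ => c := funext fun i => hconst i ⟨0, hp.pos⟩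
      rw [hv]
      exact eps_const hp G hσG hord hc
  rw [deltaPerm, hset]
  exact csSup_singleton p
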